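/- Let H be a Hopf algebra and U ⊂ H a subalgebra that is right strongly coisotropic, i.e. Δ_H(U) ⊂ U ⊗ U + H ⊗ [U,U], where [U,U] is the two-sided ideal of U generated by commutators. Then the set Ch(U) of algebra characters U → K carries an associative monoid structure with product (φψ)(u) = (φ ⊗ ψ)(Δ̃_U(u)), where Δ̃_U : U → U ⊗ U is induced by Δ_H via the identification (U ⊗ U + H ⊗ [U,U])/(H ⊗ [U,U]) ≅ U ⊗ U; and for any right H-module algebra A, the weight spaces A^ζ = {f ∈ A : f·u = ζ(u)f for all u ∈ U} satisfy A^{ζ₁}·A^{ζ₂} ⊂ A^{ζ₁ζ₂} for all characters ζ₁, ζ₂. -/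

import Mathlib

/- STATEMENT 16: If U is a right strongly coisotropic subalgebra of a Hopf algebra H
(Δ(U) ⊆ U ⊗ U + H ⊗ [U,U]), then the set of algebra characters of U carries a monoid
structure with (φψ)(u) = (φ ⊗ ψ)(Δ̃(u)) for any representative Δ(u) ≡ Σ aᵢ ⊗ bᵢ
mod H ⊗ [U,U] with aᵢ, bᵢ ∈ U, and for any right H-module algebra A the weight spaces
satisfy A^{ζ₁}·A^{ζ₂} ⊆ A^{ζ₁ζ₂}. -/

open TensorProduct

universe u

section defs

variable (K : Type u) [Field K] {H : Type u} [Ring H] [HopfAlgebra K H]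

/-- the image of `p ⊗ q` in `H ⊗ H`, for submodules `p, q ⊆ H`. -/
noncomputable def tpSubH (p q : Submodule K H) : Submodule K (H ⊗[K] H) :=
  Submodule.map₂ (TensorProduct.mk K H H) p q

/-- `[U,U]`: the two-sided ideal of `U` generated by commutators, as a submodule of `H`. -/
def commIdeal (U : Subalgebra K H) : Submodule K H :=
  Submodule.span K
    {z : H | ∃ a ∈ U, ∃ b ∈ U, ∃ c ∈ U, ∃ d ∈ U, z = a * (b * c - c * b) * d}

variable {A : Type u} [Ring A] [Algebra K A]

/-- the action of `H ⊗ H` on `A ⊗ A` induced componentwise by `act : H →ₗ End A`. -/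
noncomputable def act2 (act : H →ₗ[K] Module.End K A) :
    H ⊗[K] H →ₗ[K] A ⊗[K] A →ₗ[K] A ⊗[K] A :=
  TensorProduct.homTensorHomMap (RingHom.id K) A A A A ∘ₗ TensorProduct.map act act

end defs

namespace Stmt16Aux
variable {K H : Type u} [Field K] [Ring H] [HopfAlgebra K H] (U : Subalgebra K H)

theorem tpSubH_induction {p q : Submodule K H} {P : H ⊗[K] H → Prop}
    (pure : ∀ m ∈ p, ∀ n ∈ q, P (m ⊗ₜ[K] n)) (zero : P 0)
    (add : ∀ x y, P x → P y → P (x + y)) (smul : ∀ (c : K) x, P x → P (c • x)) :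
    ∀ x ∈ tpSubH K p q, P x := by
  intro x hx
  rw [tpSubH, Submodule.map₂_eq_span_image2] at hx
  refine Submodule.span_induction ?_ zero (fun a b _ _ ha hb => add a b ha hb)
    (fun c a _ ha => smul c a ha) hx
  rintro z ⟨m, hm, n, hn, rfl⟩
  exact pure m hm n hn

theorem commIdeal_le : commIdeal K U ≤ Subalgebra.toSubmodule U := by
  rw [commIdeal]
  refine Submodule.span_le.2 ?_
  rintro z ⟨a, ha, b, hb, c, hc, d, hd, rfl⟩
  simp only [SetLike.mem_coe, Subalgebra.mem_toSubmodule]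
  exact mul_mem (mul_mem ha (sub_mem (mul_mem hb hc) (mul_mem hc hb))) hd

theorem mul_mem_commIdeal_left : ∀ h ∈ U, ∀ z ∈ commIdeal K U, h * z ∈ commIdeal K U := by
  intro h hh z hz
  induction hz using Submodule.span_induction with
  | mem z hzm =>
    obtain ⟨a, ha, b, hb, c, hc, d, hd, rfl⟩ := hzm
    exact Submodule.subset_span ⟨h * a, mul_mem hh ha, b, hb, c, hc, d, hd, by noncomm_ring⟩
  | zero => simpa using Submodule.zero_mem _
  | add x y _ _ hx hy => rw [mul_add]; exact add_mem hx hy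
  | smul c x _ hx => rw [mul_smul_comm]; exact Submodule.smul_mem _ _ hx

theorem mul_mem_commIdeal_right : ∀ h ∈ U, ∀ z ∈ commIdeal K U, z * h ∈ commIdeal K U := by
  intro h hh z hz
  induction hz using Submodule.span_induction with
  | mem z hzm =>
    obtain ⟨a, ha, b, hb, c, hc, d, hd, rfl⟩ := hzm
    exact Submodule.subset_span ⟨a, ha, b, hb, c, hc, d * h, mul_mem hd hh, by noncomm_ring⟩
  | zero => simpa using Submodule.zero_mem _
  | add x y _ _ hx hy => rw [add_mul]; exact add_mem hx hy
  | smul c x _ hx => rw [smul_mul_assoc]; exact Submodule.smul_mem _ _ hx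

noncomputable def E (φ : U →ₐ[K] K) : H →ₗ[K] K :=
  (LinearMap.exists_extend (p := Subalgebra.toSubmodule U) φ.toLinearMap).choose

theorem hE (φ : U →ₐ[K] K) (x : H) (hx : x ∈ U) : E U φ x = φ ⟨x, hx⟩ :=
  LinearMap.congr_fun
    (LinearMap.exists_extend (p := Subalgebra.toSubmodule U) φ.toLinearMap).choose_spec ⟨x, hx⟩


theorem E_killsJ (φ : U →ₐ[K] K) : ∀ z ∈ commIdeal K U, E U φ z = 0 := by
  intro z hz
  induction hz using Submodule.span_induction with
  | mem z hzm =>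
    obtain ⟨a, ha, b, hb, c, hc, d, hd, rfl⟩ := hzm
    have hzU : a * (b * c - c * b) * d ∈ U :=
      mul_mem (mul_mem ha (sub_mem (mul_mem hb hc) (mul_mem hc hb))) hd
    rw [hE U φ _ hzU]
    have : (⟨a * (b * c - c * b) * d, hzU⟩ : U) =
        ⟨a, ha⟩ * (⟨b, hb⟩ * ⟨c, hc⟩ - ⟨c, hc⟩ * ⟨b, hb⟩) * ⟨d, hd⟩ := rfl
    rw [this, map_mul, map_mul, map_sub, map_mul, map_mul]
    ring
  | zero => simp
  | add x y _ _ hx hy => rw [map_add, hx, hy, add_zero]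
  | smul c x _ hx => rw [map_smul, hx, smul_zero]

/-- pairing `M ⊗ N → K` from two functionals -/
noncomputable def T2L {M N : Type u} [AddCommMonoid M] [AddCommMonoid N]
    [Module K M] [Module K N] (f : M →ₗ[K] K) (g : N →ₗ[K] K) : M ⊗[K] N →ₗ[K] K :=
  LinearMap.mul' K K ∘ₗ TensorProduct.map f g

theorem T2L_tmul {M N : Type u} [AddCommMonoid M] [AddCommMonoid N]
    [Module K M] [Module K N] (f : M →ₗ[K] K) (g : N →ₗ[K] K) (h : M) (h' : N) :
    T2L f g (h ⊗ₜ[K] h') = f h * g h' := by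
  simp [T2L, LinearMap.mul'_apply]

theorem T2L_kills (f g : H →ₗ[K] K) (hg : ∀ z ∈ commIdeal K U, g z = 0) :
    ∀ w ∈ tpSubH K ⊤ (commIdeal K U), T2L f g w = 0 := by
  refine tpSubH_induction (fun m _ n hn => ?_) (map_zero _) (fun x y hx hy => ?_)
    (fun c x hx => ?_)
  · rw [T2L_tmul, hg n hn, mul_zero]
  · rw [map_add, hx, hy, add_zero]
  · rw [map_smul, hx, smul_zero]

theorem T2L_congr {p q : Submodule K H} (f f' g g' : H →ₗ[K] K)
    (hf : ∀ h ∈ p, f h = f' h) (hg : ∀ h ∈ q, g h = g' h) :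
    ∀ x ∈ tpSubH K p q, T2L f g x = T2L f' g' x := by
  refine tpSubH_induction (fun m hm n hn => ?_) (by simp) (fun x y hx hy => ?_)
    (fun c x hx => ?_)
  · rw [T2L_tmul, T2L_tmul, hf m hm, hg n hn]
  · rw [map_add, map_add, hx, hy]
  · rw [map_smul, map_smul, hx]

theorem tp_mul_mem {p q p' q' r s : Submodule K H}
    (hp : ∀ a ∈ p, ∀ a' ∈ p', a * a' ∈ r) (hq : ∀ b ∈ q, ∀ b' ∈ q', b * b' ∈ s) :
    ∀ x ∈ tpSubH K p q, ∀ y ∈ tpSubH K p' q', x * y ∈ tpSubH K r s := by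
  refine tpSubH_induction (fun a haa n hn => ?_) (fun y _ => by rw [zero_mul]; exact zero_mem _)
    (fun x x' hx hx' y hy => by rw [add_mul]; exact add_mem (hx y hy) (hx' y hy))
    (fun c x hx y hy => by rw [smul_mul_assoc]; exact Submodule.smul_mem _ _ (hx y hy))
  refine tpSubH_induction (fun a' ha' n' hn' => ?_) (by rw [mul_zero]; exact zero_mem _)
    (fun y y' hy hy' => by rw [mul_add]; exact add_mem hy hy')
    (fun c y hy => by rw [mul_smul_comm]; exact Submodule.smul_mem _ _ hy)
  rw [Algebra.TensorProduct.tmul_mul_tmul]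
  exact Submodule.apply_mem_map₂ _ (hp a haa a' ha') (hq n hn n' hn')

theorem T2L_mulUU (φ ψ : U →ₐ[K] K) :
    ∀ x ∈ tpSubH K (Subalgebra.toSubmodule U) (Subalgebra.toSubmodule U),
    ∀ y ∈ tpSubH K (Subalgebra.toSubmodule U) (Subalgebra.toSubmodule U),
    T2L (E U φ) (E U ψ) (x * y) = T2L (E U φ) (E U ψ) x * T2L (E U φ) (E U ψ) y := by
  refine tpSubH_induction (fun a haa n hn => ?_) (fun y _ => by simp)
    (fun x x' hx hx' y hy => by rw [add_mul, map_add, map_add, hx y hy, hx' y hy, add_mul])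
    (fun c x hx y hy => by rw [smul_mul_assoc, map_smul, map_smul, hx y hy, smul_mul_assoc])
  refine tpSubH_induction (fun a' ha' n' hn' => ?_) (by simp)
    (fun y y' hy hy' => by rw [mul_add, map_add, map_add, hy, hy', mul_add])
    (fun c y hy => by rw [mul_smul_comm, map_smul, map_smul, hy, mul_smul_comm])
  rw [Algebra.TensorProduct.tmul_mul_tmul, T2L_tmul, T2L_tmul, T2L_tmul,
    hE U φ _ haa, hE U φ _ ha', hE U ψ _ hn, hE U ψ _ hn',
    hE U φ _ (mul_mem haa ha'), hE U ψ _ (mul_mem hn hn')]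
  have h1 : (⟨a * a', mul_mem haa ha'⟩ : U) = ⟨a, haa⟩ * ⟨a', ha'⟩ := rfl
  have h2 : (⟨n * n', mul_mem hn hn'⟩ : U) = ⟨n, hn⟩ * ⟨n', hn'⟩ := rfl
  rw [h1, h2, map_mul, map_mul]
  ring


theorem memW_mul_left {x w : H ⊗[K] H}
    (hx : x ∈ tpSubH K (Subalgebra.toSubmodule U) (Subalgebra.toSubmodule U))
    (hw : w ∈ tpSubH K ⊤ (commIdeal K U)) : x * w ∈ tpSubH K ⊤ (commIdeal K U) :=
  tp_mul_mem (fun _ _ _ _ => Submodule.mem_top)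
    (fun b hb b' hb' => mul_mem_commIdeal_left U b hb b' hb') x hx w hw

theorem memW_mul_right {x w : H ⊗[K] H}
    (hx : x ∈ tpSubH K (Subalgebra.toSubmodule U) (Subalgebra.toSubmodule U))
    (hw : w ∈ tpSubH K ⊤ (commIdeal K U)) : w * x ∈ tpSubH K ⊤ (commIdeal K U) :=
  tp_mul_mem (fun _ _ _ _ => Submodule.mem_top)
    (fun b hb b' hb' => mul_mem_commIdeal_right U b' hb' b hb) w hw x hx

theorem memW_mul_W {w w' : H ⊗[K] H}
    (hw : w ∈ tpSubH K ⊤ (commIdeal K U)) (hw' : w' ∈ tpSubH K ⊤ (commIdeal K U)) :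
    w * w' ∈ tpSubH K ⊤ (commIdeal K U) :=
  tp_mul_mem (fun _ _ _ _ => Submodule.mem_top)
    (fun b hb b' hb' => mul_mem_commIdeal_left U b (commIdeal_le U hb) b' hb') w hw w' hw'

/-- the product of two characters -/
noncomputable def mulChar (hU : ∀ u ∈ U, Coalgebra.comul (R := K) u ∈
      tpSubH K (Subalgebra.toSubmodule U) (Subalgebra.toSubmodule U) ⊔
        tpSubH K ⊤ (commIdeal K U)) (φ ψ : U →ₐ[K] K) : U →ₐ[K] K :=
  AlgHom.ofLinearMap (T2L (E U φ) (E U ψ) ∘ₗ Coalgebra.comul ∘ₗ U.val.toLinearMap)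
    (by
      simp only [LinearMap.comp_apply, AlgHom.toLinearMap_apply, map_one, Bialgebra.comul_one,
        Algebra.TensorProduct.one_def, T2L_tmul]
      rw [hE U φ _ (one_mem U), hE U ψ _ (one_mem U)]
      have h1 : (⟨(1 : H), one_mem U⟩ : U) = 1 := rfl
      rw [h1, map_one, map_one, one_mul])
    (by
      intro u v
      obtain ⟨x, hx, w, hw, hxw⟩ := Submodule.mem_sup.1 (hU ↑u u.2)
      obtain ⟨x', hx', w', hw', hxw'⟩ := Submodule.mem_sup.1 (hU ↑v v.2)
      have hKψ := T2L_kills U (E U φ) (E U ψ) (E_killsJ U ψ)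
      simp only [LinearMap.comp_apply, AlgHom.toLinearMap_apply, map_mul, Subalgebra.coe_val]
      rw [Bialgebra.comul_mul, ← hxw, ← hxw']
      have expand : (x + w) * (x' + w') = x * x' + (x * w' + (w * x' + w * w')) := by
        noncomm_ring
      rw [expand, map_add, map_add, map_add, map_add, map_add,
        hKψ _ (memW_mul_right U hx' hw), hKψ _ (memW_mul_left U hx hw'),
        hKψ _ (memW_mul_W U hw hw'), hKψ _ hw, hKψ _ hw',
        T2L_mulUU U φ ψ x hx x' hx']
      ring)

theorem mulChar_apply (hU : ∀ u ∈ U, Coalgebra.comul (R := K) u ∈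
      tpSubH K (Subalgebra.toSubmodule U) (Subalgebra.toSubmodule U) ⊔
        tpSubH K ⊤ (commIdeal K U)) (φ ψ : U →ₐ[K] K) (u : U) :
    mulChar U hU φ ψ u = T2L (E U φ) (E U ψ) (Coalgebra.comul (R := K) (u : H)) := rfl

end Stmt16Aux

open Stmt16Aux in
theorem stmt16 {K H : Type u} [Field K] [Ring H] [HopfAlgebra K H]
    (U : Subalgebra K H)
    -- U is right strongly coisotropic: Δ(U) ⊆ U ⊗ U + H ⊗ [U,U]
    (hU : ∀ u ∈ U, Coalgebra.comul (R := K) u ∈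
      tpSubH K U.toSubmodule U.toSubmodule ⊔ tpSubH K ⊤ (commIdeal K U)) :
    ∃ mul : (U →ₐ[K] K) → (U →ₐ[K] K) → (U →ₐ[K] K),
      -- the product is given by (φψ)(u) = (φ ⊗ ψ)(Δ̃(u)), computed from any
      -- decomposition Δ(u) = Σᵢ aᵢ ⊗ bᵢ + w with aᵢ, bᵢ ∈ U and w ∈ H ⊗ [U,U]:
      (∀ (φ ψ : U →ₐ[K] K) (u : U) (ι : Type u) (s : Finset ι) (a b : ι → H)
          (ha : ∀ i ∈ s, a i ∈ U) (hb : ∀ i ∈ s, b i ∈ U) (w : H ⊗[K] H),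
          w ∈ tpSubH K ⊤ (commIdeal K U) →
          Coalgebra.comul (R := K) (u : H) = (∑ i ∈ s, a i ⊗ₜ[K] b i) + w →
          mul φ ψ u = ∑ i ∈ s.attach, φ ⟨a i, ha i i.2⟩ * ψ ⟨b i, hb i i.2⟩)
      -- it is associative with identity the restriction of the counit, so that the
      -- characters of U form a monoid:
      ∧ (∀ φ ψ χ : U →ₐ[K] K, mul (mul φ ψ) χ = mul φ (mul ψ χ))
      ∧ (∀ φ : U →ₐ[K] K, mul ((Bialgebra.counitAlgHom K H).comp U.val) φ = φ)
      ∧ (∀ φ : U →ₐ[K] K, mul φ ((Bialgebra.counitAlgHom K H).comp U.val) = φ)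
      -- and for every right H-module algebra A, weight spaces multiply as
      -- A^{ζ₁} · A^{ζ₂} ⊆ A^{ζ₁ζ₂}:
      ∧ (∀ (A : Type u) (_ : Ring A) (_ : Algebra K A)
          (act : H →ₗ[K] Module.End K A)
          (_ : ∀ h h' : H, act (h * h') = act h' * act h) (_ : act 1 = 1)
          (_ : ∀ (h : H) (f g : A),
            act h (f * g) = LinearMap.mul' K A (act2 K act (Coalgebra.comul (R := K) h) (f ⊗ₜ[K] g)))
          (_ : ∀ h : H, act h (1 : A) = Coalgebra.counit (R := K) h • (1 : A))
          (ζ₁ ζ₂ : U →ₐ[K] K) (f g : A),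
          (∀ u : U, act u f = ζ₁ u • f) → (∀ u : U, act u g = ζ₂ u • g) →
          ∀ u : U, act u (f * g) = mul ζ₁ ζ₂ u • (f * g)) := by
  classical
  refine ⟨mulChar U hU, ?_, ?_, ?_, ?_, ?_⟩
  · -- the formula
    intro φ ψ u ι s a b ha hb w hw hdec
    rw [mulChar_apply, hdec, map_add, T2L_kills U _ _ (E_killsJ U ψ) w hw, add_zero, map_sum]
    simp only [T2L_tmul]
    rw [← Finset.sum_attach s (fun i => E U φ (a i) * E U ψ (b i))]
    refine Finset.sum_congr rfl fun i _ => ?_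
    rw [hE U φ _ (ha i i.2), hE U ψ _ (hb i i.2)]
  · -- associativity
    intro φ ψ χ
    apply AlgHom.ext
    intro u
    obtain ⟨x, hx, w, hw, hxw⟩ := Submodule.mem_sup.1 (hU ↑u u.2)
    set L : H →ₗ[K] K := T2L (E U φ) (E U ψ) ∘ₗ Coalgebra.comul with hL
    set R : H →ₗ[K] K := T2L (E U ψ) (E U χ) ∘ₗ Coalgebra.comul with hR
    have hLagree : ∀ h ∈ U.toSubmodule, E U (mulChar U hU φ ψ) h = L h := by
      intro h hh
      rw [hE U _ h hh]; rfl
    have hRagree : ∀ h ∈ U.toSubmodule, E U (mulChar U hU ψ χ) h = R h := by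
      intro h hh
      rw [hE U _ h hh]; rfl
    have hRkills : ∀ z ∈ commIdeal K U, R z = 0 := fun z hz => by
      rw [← hRagree z (commIdeal_le U hz)]; exact E_killsJ U _ z hz
    have lhs : mulChar U hU (mulChar U hU φ ψ) χ u = T2L L (E U χ) (Coalgebra.comul (↑u : H)) := by
      rw [mulChar_apply, ← hxw, map_add, map_add,
        T2L_kills U _ _ (E_killsJ U χ) w hw, T2L_kills U _ _ (E_killsJ U χ) w hw,
        T2L_congr (E U (mulChar U hU φ ψ)) L (E U χ) (E U χ) hLagree (fun _ _ => rfl) x hx]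
    have rhs : mulChar U hU φ (mulChar U hU ψ χ) u = T2L (E U φ) R (Coalgebra.comul (↑u : H)) := by
      rw [mulChar_apply, ← hxw, map_add, map_add,
        T2L_kills U _ _ (E_killsJ U (mulChar U hU ψ χ)) w hw,
        T2L_kills U _ R hRkills w hw,
        T2L_congr (E U φ) (E U φ) (E U (mulChar U hU ψ χ)) R (fun _ _ => rfl) hRagree x hx]
    rw [lhs, rhs]
    have c1 : ∀ t : H ⊗[K] H, T2L L (E U χ) t =
        T2L (T2L (E U φ) (E U ψ)) (E U χ) ((Coalgebra.comul (R := K)).rTensor H t) := by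
      intro t
      induction t with
      | zero => simp
      | tmul h h' => simp [T2L_tmul, hL, LinearMap.rTensor_tmul]
      | add t t' h1 h2 => simp [map_add, h1, h2]
    have c2 : ∀ t : H ⊗[K] H, T2L (E U φ) R t =
        T2L (E U φ) (T2L (E U ψ) (E U χ)) ((Coalgebra.comul (R := K)).lTensor H t) := by
      intro t
      induction t with
      | zero => simp
      | tmul h h' => simp [T2L_tmul, hR, LinearMap.lTensor_tmul]
      | add t t' h1 h2 => simp [map_add, h1, h2]
    have c3 : ∀ y : (H ⊗[K] H) ⊗[K] H,
        T2L (E U φ) (T2L (E U ψ) (E U χ)) (TensorProduct.assoc K H H H y) =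
        T2L (T2L (E U φ) (E U ψ)) (E U χ) y := by
      intro y
      have := TensorProduct.ext_threefold
        (g := T2L (E U φ) (T2L (E U ψ) (E U χ)) ∘ₗ (TensorProduct.assoc K H H H).toLinearMap)
        (h := T2L (T2L (E U φ) (E U ψ)) (E U χ))
        (fun h h' h'' => by simp [T2L_tmul, mul_assoc])
      exact LinearMap.congr_fun this y
    rw [c1, c2, ← Coalgebra.coassoc_apply, c3]
  · -- left unit
    intro φ
    apply AlgHom.ext
    intro u
    obtain ⟨x, hx, w, hw, hxw⟩ := Submodule.mem_sup.1 (hU ↑u u.2)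
    have hεagree : ∀ h ∈ U.toSubmodule, E U ((Bialgebra.counitAlgHom K H).comp U.val) h =
        Coalgebra.counit (R := K) h := by
      intro h hh
      rw [hE U _ h hh]; rfl
    have key : ∀ t : H ⊗[K] H, T2L (Coalgebra.counit (R := K)) (E U φ) t =
        E U φ (TensorProduct.lid K H ((Coalgebra.counit (R := K)).rTensor H t)) := by
      intro t
      induction t with
      | zero => simp
      | tmul h h' => simp [T2L_tmul, LinearMap.rTensor_tmul, smul_eq_mul]
      | add t t' h1 h2 => simp [map_add, h1, h2]
    rw [mulChar_apply, ← hxw, map_add, T2L_kills U _ _ (E_killsJ U φ) w hw, add_zero,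
      T2L_congr (E U ((Bialgebra.counitAlgHom K H).comp U.val)) (Coalgebra.counit (R := K)) (E U φ) (E U φ) hεagree (fun _ _ => rfl) x hx]
    have : T2L (Coalgebra.counit (R := K)) (E U φ) x =
        T2L (Coalgebra.counit (R := K)) (E U φ) (Coalgebra.comul (R := K) (↑u : H)) := by
      rw [← hxw, map_add, T2L_kills U _ _ (E_killsJ U φ) w hw, add_zero]
    rw [this, key, Coalgebra.rTensor_counit_comul]
    simp [hE U φ _ u.2]
  · -- right unit
    intro φ
    apply AlgHom.ext
    intro u
    obtain ⟨x, hx, w, hw, hxw⟩ := Submodule.mem_sup.1 (hU ↑u u.2)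
    have hεagree : ∀ h ∈ U.toSubmodule, E U ((Bialgebra.counitAlgHom K H).comp U.val) h =
        Coalgebra.counit (R := K) h := by
      intro h hh
      rw [hE U _ h hh]; rfl
    have hεkills : ∀ z ∈ commIdeal K U, Coalgebra.counit (R := K) z = 0 := by
      intro z hz
      rw [← hεagree z (commIdeal_le U hz)]
      exact E_killsJ U _ z hz
    have key : ∀ t : H ⊗[K] H, T2L (E U φ) (Coalgebra.counit (R := K)) t =
        E U φ (TensorProduct.rid K H ((Coalgebra.counit (R := K)).lTensor H t)) := by
      intro t
      induction t with
      | zero => simp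
      | tmul h h' => simp [T2L_tmul, LinearMap.lTensor_tmul, smul_eq_mul, mul_comm]
      | add t t' h1 h2 => simp [map_add, h1, h2]
    rw [mulChar_apply, ← hxw, map_add,
      T2L_kills U _ _ (E_killsJ U ((Bialgebra.counitAlgHom K H).comp U.val)) w hw, add_zero,
      T2L_congr (E U φ) (E U φ) (E U ((Bialgebra.counitAlgHom K H).comp U.val)) (Coalgebra.counit (R := K)) (fun _ _ => rfl) hεagree x hx]
    have : T2L (E U φ) (Coalgebra.counit (R := K)) x =
        T2L (E U φ) (Coalgebra.counit (R := K)) (Coalgebra.comul (R := K) (↑u : H)) := by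
      rw [← hxw, map_add, T2L_kills U _ _ hεkills w hw, add_zero]
    rw [this, key, Coalgebra.lTensor_counit_comul]
    simp [hE U φ _ u.2]
  · -- weight spaces
    intro A _ _ act hanti hone hcomul hcounit ζ₁ ζ₂ f g hf hg u
    obtain ⟨x, hx, w, hw, hxw⟩ := Submodule.mem_sup.1 (hU ↑u u.2)
    have hxA : ∀ x ∈ tpSubH K U.toSubmodule U.toSubmodule,
        LinearMap.mul' K A (act2 K act x (f ⊗ₜ[K] g)) =
          T2L (E U ζ₁) (E U ζ₂) x • (f * g) := by
      refine tpSubH_induction (fun m hm n hn => ?_) (by simp) (fun y y' hy hy' => ?_)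
        (fun c y hy => ?_)
      · rw [T2L_tmul, hE U ζ₁ _ hm, hE U ζ₂ _ hn]
        have : act2 K act (m ⊗ₜ[K] n) (f ⊗ₜ[K] g) = act m f ⊗ₜ[K] act n g := by
          simp [act2, TensorProduct.homTensorHomMap_apply]
        rw [this, hf ⟨m, hm⟩, hg ⟨n, hn⟩, LinearMap.mul'_apply, smul_mul_assoc,
          mul_smul_comm, smul_smul]
      · simp only [map_add, LinearMap.add_apply, hy, hy', add_smul]
      · simp only [map_smul, LinearMap.smul_apply, hy, smul_assoc]
    have hwA : ∀ w ∈ tpSubH K ⊤ (commIdeal K U),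
        LinearMap.mul' K A (act2 K act w (f ⊗ₜ[K] g)) = 0 := by
      refine tpSubH_induction (fun m _ n hn => ?_) (by simp) (fun y y' hy hy' => ?_)
        (fun c y hy => ?_)
      · have hact : act n g = 0 := by
          rw [hg ⟨n, commIdeal_le U hn⟩, ← hE U ζ₂ n (commIdeal_le U hn),
            E_killsJ U ζ₂ n hn, zero_smul]
        have : act2 K act (m ⊗ₜ[K] n) (f ⊗ₜ[K] g) = act m f ⊗ₜ[K] act n g := by
          simp [act2, TensorProduct.homTensorHomMap_apply]
        rw [this, hact, TensorProduct.tmul_zero, map_zero]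
      · simp only [map_add, LinearMap.add_apply, hy, hy', add_zero]
      · simp only [map_smul, LinearMap.smul_apply, hy, smul_zero]
    rw [hcomul ↑u f g, ← hxw]
    simp only [map_add, LinearMap.add_apply]
    rw [hxA x hx, hwA w hw, add_zero, mulChar_apply, ← hxw, map_add,
      T2L_kills U _ _ (E_killsJ U ζ₂) w hw, add_zero]
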